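/- For n = 1 (V = ℂ² with symplectic form), the complement in 𝔰𝔭₂ ⊕ V of the Sp₂-saturation of the slice Σ is contained in the union of 𝔰𝔭₂ × {0} and {(x,v) : x = c·v² for some c ≠ 1}, both of which have codimension 2 in 𝔰𝔭₂ ⊕ V. -/

import Mathlib

open Matrix

namespace Sp2Slice

/-- The standard symplectic matrix on `ℂ²`. -/
noncomputable def J : Matrix (Fin 2) (Fin 2) ℂ := !![0, 1; -1, 0]

/-- Standard regular `sl₂`-triple elements in `𝔰𝔭₂`. -/
noncomputable def eM : Matrix (Fin 2) (Fin 2) ℂ := !![0, 1; 0, 0]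
noncomputable def fM : Matrix (Fin 2) (Fin 2) ℂ := !![0, 0; 1, 0]
noncomputable def hM : Matrix (Fin 2) (Fin 2) ℂ := !![1, 0; 0, -1]

/-- The rank-one element `v² : u ↦ ⟨v,u⟩v` of `𝔰𝔭₂`, as a matrix. -/
noncomputable def vsq (v : Fin 2 → ℂ) : Matrix (Fin 2) (Fin 2) ℂ :=
  Matrix.of fun i j => (v ⬝ᵥ (J *ᵥ Pi.single j 1)) * v i

/-- The saturation `Sp₂ · Σ` of the slice `Σ = {(e + s·f, (1,a))}` under the
`Sp₂`-action `g · (x,v) = (g x g⁻¹, g v)`. -/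
def saturation : Set (Matrix (Fin 2) (Fin 2) ℂ × (Fin 2 → ℂ)) :=
  {p | ∃ g : Matrix (Fin 2) (Fin 2) ℂ, gᵀ * J * g = J ∧ IsUnit g ∧
    ∃ s a : ℂ, p.1 = g * (eM + s • fM) * g⁻¹ ∧ p.2 = g *ᵥ ![1, a]}

/-- For `n = 1`, the complement in `𝔰𝔭₂ ⊕ ℂ²` of the `Sp₂`-saturation of the
slice `Σ` is contained in the union of `𝔰𝔭₂ × {0}` and `{(x,v) : x = c·v², c ≠ 1}`; moreover
both of these sets are images of `3`-parameter families, hence have codimension `2` in the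
`5`-dimensional space `𝔰𝔭₂ ⊕ ℂ²`. -/
lemma vsq_pair (v₀ v₁ : ℂ) : vsq ![v₀, v₁] = !![-(v₀*v₁), v₀^2; -(v₁^2), v₀*v₁] := by
  ext i j
  fin_cases i <;> fin_cases j <;>
    simp [vsq, J, Matrix.mulVec, dotProduct, Fin.sum_univ_two, Pi.single_apply] <;> ring

lemma solve (A B C : ℂ) (h : A = 0 → B = 0 → C = 0) : ∃ t, A*t^2 + B*t + C = 0 := by
  by_cases hA : A = 0
  · by_cases hB : B = 0
    · exact ⟨0, by simp [hA, hB, h hA hB]⟩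
    · refine ⟨-C/B, by rw [hA]; field_simp; ring⟩
  · obtain ⟨z, hz⟩ := IsAlgClosed.exists_pow_nat_eq (B^2 - 4*A*C) (n := 2) (by norm_num)
    refine ⟨(-B + z)/(2*A), ?_⟩
    field_simp
    linear_combination hz

lemma mem_saturation_of (α β γ v₀ v₁ w₀ w₁ : ℂ)
    (h1 : v₀ * w₁ - v₁ * w₀ = 1)
    (h2 : -(γ * w₀^2) + 2*α*w₀*w₁ + β*w₁^2 = 1) :
    (!![α, β; γ, -α], ![v₀, v₁]) ∈ saturation := by
  set u₀ := α*w₀ + β*w₁ with hu₀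
  set u₁ := γ*w₀ - α*w₁ with hu₁
  set g : Matrix (Fin 2) (Fin 2) ℂ := !![u₀, w₀; u₁, w₁] with hg
  have hdet : g.det = 1 := by
    rw [hg, Matrix.det_fin_two_of]
    linear_combination h2
  have hgu : IsUnit g := (Matrix.isUnit_iff_isUnit_det g).2 (by rw [hdet]; exact isUnit_one)
  have hR : (v₀ - u₀) * w₁ - (v₁ - u₁) * w₀ = 0 := by
    linear_combination h1 - h2
  set a := (v₁ - u₁)*v₀ - (v₀ - u₀)*v₁ with ha
  set s := α^2 + β*γ with hs
  have hM' : eM + s • fM = !![0, 1; s, 0] := by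
    ext i j
    fin_cases i <;> fin_cases j <;> simp [eM, fM]
  have hxg : !![α, β; γ, -α] * g = g * !![0, 1; s, 0] := by
    ext i j
    fin_cases i <;> fin_cases j <;>
      simp [hg, hs, hu₀, hu₁, Matrix.mul_apply, Matrix.transpose_apply, Fin.sum_univ_two] <;> ring
  refine ⟨g, ?_, hgu, s, a, ?_, ?_⟩
  · ext i j
    fin_cases i <;> fin_cases j <;>
      simp [hg, J, Matrix.mul_apply, Matrix.transpose_apply, Matrix.vecHead, Matrix.vecTail, Fin.sum_univ_two] <;>
      first
      | ring1
      | linear_combination h2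
      | linear_combination -h2
  · have h3 : !![α, β; γ, -α] * g * g⁻¹ = g * !![0, 1; s, 0] * g⁻¹ := by rw [hxg]
    rw [Matrix.mul_assoc, Matrix.mul_nonsing_inv _ (by rw [hdet]; exact isUnit_one),
      Matrix.mul_one] at h3
    rw [hM']
    exact h3
  · funext i
    fin_cases i <;>
      simp [hg, Matrix.mulVec, dotProduct, Fin.sum_univ_two]
    · linear_combination v₀ * hR - (v₀ - u₀) * h1
    · linear_combination v₁ * hR - (v₁ - u₁) * h1

theorem complement_of_saturation_has_codim_two :
    (∀ p : Matrix (Fin 2) (Fin 2) ℂ × (Fin 2 → ℂ),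
      p.1ᵀ * J + J * p.1 = 0 → p ∉ saturation →
        (p.2 = 0 ∨ ∃ c : ℂ, c ≠ 1 ∧ p.1 = c • vsq p.2)) ∧
    ({p : Matrix (Fin 2) (Fin 2) ℂ × (Fin 2 → ℂ) | p.1ᵀ * J + J * p.1 = 0 ∧ p.2 = 0} ⊆
      Set.range (fun c : Fin 3 → ℂ => ((c 0 • eM + c 1 • fM + c 2 • hM : Matrix (Fin 2) (Fin 2) ℂ),
        (0 : Fin 2 → ℂ)))) ∧
    ({p : Matrix (Fin 2) (Fin 2) ℂ × (Fin 2 → ℂ) | ∃ c : ℂ, c ≠ 1 ∧ p.1 = c • vsq p.2} ⊆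
      Set.range (fun c : Fin 3 → ℂ => (c 0 • vsq ![c 1, c 2], ![c 1, c 2]))) := by
  refine ⟨?_, ?_, ?_⟩
  · intro p htr hns
    by_cases hv : p.2 = 0
    · exact Or.inl hv
    right
    by_contra hcon
    push_neg at hcon
    set α := p.1 0 0 with hα
    set β := p.1 0 1 with hβ
    set γ := p.1 1 0 with hγ
    set v₀ := p.2 0 with hv₀
    set v₁ := p.2 1 with hv₁
    have hδ : p.1 1 1 = -α := by
      have h := congrFun (congrFun htr 0) 1
      simp [J, Matrix.mul_apply, Matrix.transpose_apply, Matrix.vecMul, Matrix.mulVec,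
        dotProduct, Fin.sum_univ_two, Matrix.add_apply] at h
      linear_combination h
    have hp1 : p.1 = !![α, β; γ, -α] := by
      ext i j
      fin_cases i <;> fin_cases j <;> simp [hα, hβ, hγ, hδ]
    have hp2 : p.2 = ![v₀, v₁] := by
      funext i; fin_cases i <;> rfl
    have hvsq : vsq p.2 = !![-(v₀*v₁), v₀^2; -(v₁^2), v₀*v₁] := by rw [hp2, vsq_pair]
    refine hns ?_
    have hps : p = (!![α, β; γ, -α], ![v₀, v₁]) := Prod.ext hp1 hp2
    rw [hps]
    by_cases hv0 : v₀ = 0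
    · have hv1 : v₁ ≠ 0 := by
        intro h0
        apply hv
        rw [hp2, hv0, h0]
        funext i
        fin_cases i <;> rfl
      have hkey : β*v₁^2 = 0 → -(2*α*v₁) = 0 → -γ - v₁^2 = 0 := by
        intro hA hB
        have hβ0 : β = 0 := (mul_eq_zero.1 hA).resolve_right (pow_ne_zero 2 hv1)
        have hα0 : α = 0 := by
          have h' : (2*α)*v₁ = 0 := by linear_combination -hB
          rcases mul_eq_zero.1 h' with h | h
          · linear_combination h/2
          · exact absurd h hv1
        by_contra hC
        refine hcon (-γ/v₁^2) ?_ ?_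
        · intro h
          apply hC
          field_simp at h
          linear_combination h
        · rw [hp1, hvsq]
          ext i j
          fin_cases i <;> fin_cases j
          · simp [hα0, hβ0, hv0]
          · simp [hβ0, hv0]
          · simp
            field_simp
          · simp [hα0, hv0]
      obtain ⟨t, ht⟩ := solve _ _ _ hkey
      apply mem_saturation_of α β γ v₀ v₁ (-(1/v₁)) t
      · rw [hv0]
        field_simp
        ring
      · field_simp
        linear_combination ht
    · have hkey : (-(γ*v₀^2) + 2*α*v₀*v₁ + β*v₁^2) = 0 → 2*(α*v₀+β*v₁) = 0 → β - v₀^2 = 0 := by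
        intro hA hB
        have hB' : α*v₀ + β*v₁ = 0 := by linear_combination hB/2
        by_contra hC
        refine hcon (β/v₀^2) ?_ ?_
        · intro h
          apply hC
          field_simp at h
          linear_combination h
        · rw [hp1, hvsq]
          ext i j
          fin_cases i <;> fin_cases j
          · simp
            field_simp
            linear_combination hB'
          · simp
            field_simp
          · simp
            field_simp
            linear_combination -hA + 2*v₁*hB'
          · simp
            field_simp
            linear_combination -hB'
      obtain ⟨t, ht⟩ := solve _ _ _ hkey
      apply mem_saturation_of α β γ v₀ v₁ t ((1 + v₁*t)/v₀)
      · field_simp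
        ring
      · field_simp
        linear_combination ht
  · rintro ⟨x, v⟩ ⟨htr, hv⟩
    have hδ : x 1 1 = -(x 0 0) := by
      have h := congrFun (congrFun htr 0) 1
      simp [J, Matrix.mul_apply, Matrix.transpose_apply, Matrix.vecMul, Matrix.mulVec,
        dotProduct, Fin.sum_univ_two, Matrix.add_apply] at h
      linear_combination h
    refine ⟨![x 0 1, x 1 0, x 0 0], ?_⟩
    refine Prod.ext ?_ hv.symm
    ext i j
    fin_cases i <;> fin_cases j <;>
      simp [eM, fM, hM, hδ]
  · rintro ⟨x, v⟩ ⟨c, -, hx⟩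
    refine ⟨![c, v 0, v 1], ?_⟩
    have hv : ![v 0, v 1] = v := by funext i; fin_cases i <;> rfl
    show (c • vsq ![v 0, v 1], ![v 0, v 1]) = (x, v)
    rw [hv]
    exact Prod.ext hx.symm rfl


end Sp2Slice
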